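/- Let t₁₁, t₂₂, t₁₂ be complex numbers with t₁₁ ≠ t₂₂, and let T = !![t₁₁, t₁₂; 0, t₂₂]. Set r = √(|t₁₁ − t₂₂|² + |t₁₂|²), c = |t₁₂|/r, s = |t₁₁ − t₂₂|/r, and α = arg(t₁₂) − arg(t₁₁ − t₂₂), and let U = !![e^{−iα}·c, −s; s, e^{iα}·c]. Then the matrix T′ = U * T * Uᴴ is upper triangular with the diagonal entries of T swapped: T′ 1 0 = 0, T′ 0 0 = t₂₂, and T′ 1 1 = t₁₁. -/

import Mathlib

open Matrix Complex

theorem reordering_swaps_diagonal (t₁₁ t₂₂ t₁₂ : ℂ) (hne : t₁₁ ≠ t₂₂)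
    (T : Matrix (Fin 2) (Fin 2) ℂ) (hT : T = !![t₁₁, t₁₂; 0, t₂₂])
    (r : ℝ) (hr : r = Real.sqrt (‖t₁₁ - t₂₂‖ ^ 2 + ‖t₁₂‖ ^ 2))
    (c : ℝ) (hc : c = ‖t₁₂‖ / r)
    (s : ℝ) (hs : s = ‖t₁₁ - t₂₂‖ / r)
    (α : ℝ) (hα : α = Complex.arg t₁₂ - Complex.arg (t₁₁ - t₂₂))
    (U : Matrix (Fin 2) (Fin 2) ℂ)
    (hU : U = !![Complex.exp (-(α * Complex.I)) * (c : ℂ), -(s : ℂ);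
                 (s : ℂ), Complex.exp (α * Complex.I) * (c : ℂ)])
    (T' : Matrix (Fin 2) (Fin 2) ℂ) (hT' : T' = U * T * Uᴴ) :
    T' 1 0 = 0 ∧ T' 0 0 = t₂₂ ∧ T' 1 1 = t₁₁ := by
  have hD : t₁₁ - t₂₂ ≠ 0 := sub_ne_zero.mpr hne
  set A := ‖t₁₁ - t₂₂‖ with hA
  set B := ‖t₁₂‖ with hB
  have hA0 : 0 < A := norm_pos_iff.mpr hD
  have hr0 : 0 < r := by rw [hr]; positivity
  have hrne : (r : ℂ) ≠ 0 := by exact_mod_cast hr0.ne'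
  have hr2 : r ^ 2 = A ^ 2 + B ^ 2 := by
    rw [hr]; exact Real.sq_sqrt (by positivity)
  have ha : (A : ℂ) * Complex.exp ((t₁₁ - t₂₂).arg * Complex.I) = t₁₁ - t₂₂ :=
    Complex.norm_mul_exp_arg_mul_I _
  have hb : (B : ℂ) * Complex.exp (t₁₂.arg * Complex.I) = t₁₂ :=
    Complex.norm_mul_exp_arg_mul_I _
  set eT := Complex.exp ((t₁₂.arg : ℂ) * Complex.I) with heT
  set eD := Complex.exp (((t₁₁ - t₂₂).arg : ℂ) * Complex.I) with heD
  have heDne : eD ≠ 0 := Complex.exp_ne_zero _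
  have heTne : eT ≠ 0 := Complex.exp_ne_zero _
  have hE : Complex.exp ((α : ℂ) * Complex.I) = eT / eD := by
    rw [hα, heT, heD, ← Complex.exp_sub]; push_cast; ring_nf
  have hEm : Complex.exp (-((α : ℂ) * Complex.I)) = eD / eT := by
    rw [hα, heT, heD, ← Complex.exp_sub]; push_cast; ring_nf
  have h4 : Complex.exp ((α : ℂ) * Complex.I) * Complex.exp (-((α : ℂ) * Complex.I)) = 1 := by
    rw [← Complex.exp_add]; simp
  have key1 : eT * (B : ℂ) * (t₁₁ - t₂₂) = (A : ℂ) * t₁₂ * eD := by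
    linear_combination (-(eT * (B:ℂ))) * ha + ((A:ℂ) * eD) * hb
  have h1 : Complex.exp ((α : ℂ) * Complex.I) * (c : ℂ) * (t₁₁ - t₂₂) = (s : ℂ) * t₁₂ := by
    rw [hE, hc, hs]
    push_cast
    field_simp
    linear_combination key1
  have key2 : eD * (A : ℂ) * t₁₂ = (B : ℂ) * (t₁₁ - t₂₂) * eT := by
    linear_combination ((B:ℂ) * eT) * ha + (-(eD * (A:ℂ))) * hb
  have h2 : Complex.exp (-((α : ℂ) * Complex.I)) * (s : ℂ) * t₁₂ = (c : ℂ) * (t₁₁ - t₂₂) := by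
    rw [hEm, hc, hs]
    push_cast
    field_simp
    linear_combination key2
  have h3 : (c : ℂ) ^ 2 + (s : ℂ) ^ 2 = 1 := by
    have h : c ^ 2 + s ^ 2 = 1 := by
      rw [hc, hs, div_pow, div_pow, ← add_div, hr2]
      field_simp
      linarith [hr2]
    exact_mod_cast h
  subst hT hU hT'
  refine ⟨?_, ?_, ?_⟩ <;>
    simp [Matrix.mul_apply, Fin.sum_univ_two, Matrix.conjTranspose_apply,
      ← Complex.exp_conj, _root_.map_mul, map_neg, Complex.conj_ofReal, Complex.conj_I,
      mul_neg, neg_neg]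
  · linear_combination (s : ℂ) * h1
  · linear_combination (c:ℂ)^2 * t₁₁ * h4 + (-(c:ℂ)) * h2 + t₂₂ * h3
  · linear_combination (c:ℂ)^2 * t₂₂ * h4 + (c:ℂ) * h2 + t₁₁ * h3
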